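/- The adjoint of the shift semigroup acts on the biorthogonal functions by 𝒰_t^* g_n^* = e^{conj(λ_n) t} g_n^* for every n ∈ ℤ and t ≥ 0. -/

import Mathlib

open MeasureTheory Complex

/-- `cut T x = x mod T`. -/
noncomputable def cut (T x : ℝ) : ℝ := x - T * ⌊x / T⌋

/-- `λ_n = 2πin/T - λ - α/2`. -/
noncomputable def lamn (T lm al : ℝ) (n : ℤ) : ℂ :=
  2 * Real.pi * Complex.I * n / T - lm - al / 2

/-- `e_n(x) = T^{-1/2} exp((2πin/T - λ)x)`. -/
noncomputable def efun (T lm : ℝ) (n : ℤ) (x : ℝ) : ℂ :=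
  (1 / Real.sqrt T : ℝ) • Complex.exp ((2 * Real.pi * Complex.I * n / T - lm) * x)

/-- the derivative of `g_n^*`: `y ↦ e^{-αy/2} (1-e^{-2λT}) e^{2λ cut(y)} e_n(y)`. -/
noncomputable def dgnstar (T lm al : ℝ) (n : ℤ) (y : ℝ) : ℂ :=
  (Real.exp (-al * y / 2) * ((1 - Real.exp (-2 * lm * T)) * Real.exp (2 * lm * cut T y)))
    • efun T lm n y

/-- `g_n^*(x) = ∫₀^x e^{-αy/2} e_n^*(y) dy`. -/
noncomputable def gnstar (T lm al : ℝ) (n : ℤ) (x : ℝ) : ℂ :=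
  ∫ y in (0:ℝ)..x, dgnstar T lm al n y

namespace Stmt10Aux

lemma cut_add_int (T : ℝ) (hT : T ≠ 0) (x : ℝ) (k : ℤ) : cut T (x + k * T) = cut T x := by
  unfold cut
  have : (x + k * T) / T = x / T + k := by field_simp
  rw [this, Int.floor_add_intCast]
  push_cast
  ring

lemma cut_nonneg (T : ℝ) (hT : 0 < T) (x : ℝ) : 0 ≤ cut T x := by
  unfold cut
  have h1 : T * ⌊x / T⌋ ≤ T * (x / T) :=
    mul_le_mul_of_nonneg_left (Int.floor_le _) hT.le
  rw [mul_div_cancel₀ _ hT.ne'] at h1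
  linarith

lemma cut_lt (T : ℝ) (hT : 0 < T) (x : ℝ) : cut T x < T := by
  unfold cut
  have h1 : x / T < ⌊x / T⌋ + 1 := Int.lt_floor_add_one _
  have := (div_lt_iff₀ hT).mp h1
  nlinarith

lemma cut_eq_self (T : ℝ) (hT : 0 < T) {x : ℝ} (h0 : 0 ≤ x) (h1 : x < T) : cut T x = x := by
  unfold cut
  have : ⌊x / T⌋ = 0 := by
    rw [Int.floor_eq_zero_iff]
    exact ⟨by positivity, (div_lt_one hT).mpr h1⟩
  simp [this]

lemma floor_eq_of_mem_Ico {T : ℝ} (hT : 0 < T) {k : ℤ} {x : ℝ}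
    (hx : x ∈ Set.Ico (k * T) ((k + 1) * T)) : ⌊x / T⌋ = k := by
  obtain ⟨h1, h2⟩ := hx
  rw [Int.floor_eq_iff]
  refine ⟨by rw [le_div_iff₀ hT]; linarith, by rw [div_lt_iff₀ hT]; push_cast at h2 ⊢; linarith⟩

lemma integrableOn_Ico_comp_add (c a b : ℝ) (f : ℝ → ℂ) :
    IntegrableOn (fun x => f (x + c)) (Set.Ico (a - c) (b - c)) ↔
      IntegrableOn f (Set.Ico a b) := by
  have h : (· + c)⁻¹' (Set.Ico a b) = Set.Ico (a - c) (b - c) := by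
    ext x
    simp only [Set.mem_preimage, Set.mem_Ico]
    constructor <;> rintro ⟨h1, h2⟩ <;> exact ⟨by linarith, by linarith⟩
  rw [← h]
  exact (measurePreserving_add_right volume c).integrableOn_comp_preimage
    (measurableEmbedding_addRight c)

lemma per_slice {T : ℝ} {P : ℝ → ℂ} (hP : Function.Periodic P T)
    {a : ℝ} (hi : IntegrableOn P (Set.Ico a (a + T))) (m : ℤ) :
    IntegrableOn P (Set.Ico (a + m * T) (a + m * T + T)) := by
  have h := (integrableOn_Ico_comp_add (m * T) (a + m * T) (a + m * T + T) P).mp ?_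
  · exact h
  · have e1 : a + m * T - m * T = a := by ring
    have e2 : a + m * T + T - m * T = a + T := by ring
    rw [e1, e2]
    have : (fun x => P (x + m * T)) = P := by
      funext x
      have := hP.sub_int_mul_eq (n := -m) (x := x)
      simpa using this
    rwa [this]

lemma per_transfer {T : ℝ} (hT : 0 < T) {P : ℝ → ℂ} (hP : Function.Periodic P T)
    {a : ℝ} (hi : IntegrableOn P (Set.Ico a (a + T))) (b : ℝ) :
    IntegrableOn P (Set.Ico b (b + T)) := by
  set m : ℤ := ⌊(b - a) / T⌋ with hm
  have h1 : a + m * T ≤ b := by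
    have h := Int.floor_le ((b - a) / T)
    have h' := mul_le_mul_of_nonneg_left h hT.le
    rw [mul_div_cancel₀ _ hT.ne'] at h'
    linarith [h']
  have h2 : b + T ≤ a + m * T + T + T := by
    have h := Int.lt_floor_add_one ((b - a) / T)
    have h' := (div_lt_iff₀ hT).mp h
    push_cast at h'
    linarith
  have hA := per_slice hP hi m
  have hB := per_slice hP hi (m + 1)
  have hU : IntegrableOn P (Set.Ico (a + m * T) (a + m * T + T + T)) := by
    apply (hA.union hB).mono_set
    intro x hx
    rcases lt_or_ge x (a + m * T + T) with h | h
    · exact Set.mem_union_left _ ⟨hx.1, h⟩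
    · refine Set.mem_union_right _ ⟨by push_cast; linarith [h], ?_⟩
      push_cast
      linarith [hx.2]
  exact hU.mono_set fun x hx => ⟨by linarith [hx.1], by linarith [hx.2]⟩

variable {E : Type*} [NormedAddCommGroup E] [NormedSpace ℝ E]

lemma setIntegral_comp_add (c : ℝ) (f : ℝ → E) (s : Set ℝ) :
    ∫ x in (· + c)⁻¹' s, f (x + c) = ∫ x in s, f x :=
  (measurePreserving_add_right volume c).setIntegral_preimage_emb
    (measurableEmbedding_addRight c) f s

lemma setIntegral_Ico_comp_add (c a b : ℝ) (f : ℝ → E) :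
    ∫ x in Set.Ico (a - c) (b - c), f (x + c) = ∫ x in Set.Ico a b, f x := by
  have h : (· + c)⁻¹' (Set.Ico a b) = Set.Ico (a - c) (b - c) := by
    ext x
    simp only [Set.mem_preimage, Set.mem_Ico]
    constructor <;> rintro ⟨h1, h2⟩ <;> exact ⟨by linarith, by linarith⟩
  rw [← h, setIntegral_comp_add]

lemma integral_Ico_eq_intervalIntegral {u v : ℝ} (h : u ≤ v) (P : ℝ → E) :
    ∫ x in Set.Ico u v, P x = ∫ x in u..v, P x := by
  rw [integral_Ico_eq_integral_Ioo, intervalIntegral.integral_of_le h,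
    integral_Ioc_eq_integral_Ioo]

lemma per_setIntegral {T : ℝ} (hT : 0 < T) {P : ℝ → E} (hP : Function.Periodic P T) (b : ℝ) :
    ∫ x in Set.Ico b (b + T), P x = ∫ x in Set.Ico 0 T, P x := by
  rw [integral_Ico_eq_intervalIntegral (by linarith) P,
    integral_Ico_eq_intervalIntegral hT.le P]
  have := hP.intervalIntegral_add_eq b 0
  simpa using this

lemma Ici_eq_iUnion {T : ℝ} (hT : 0 < T) :
    Set.Ici (0:ℝ) = ⋃ k : ℕ, Set.Ico (k * T) ((k + 1) * T) := by
  ext x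
  simp only [Set.mem_Ici, Set.mem_iUnion, Set.mem_Ico]
  constructor
  · intro hx
    have h0 : (0:ℤ) ≤ ⌊x / T⌋ := Int.floor_nonneg.mpr (by positivity)
    have hcast : ((⌊x / T⌋.toNat : ℕ) : ℝ) = (⌊x / T⌋ : ℝ) := by
      exact_mod_cast congrArg (fun z : ℤ => (z : ℝ)) (Int.toNat_of_nonneg h0)
    have hfl : T * ⌊x / T⌋ ≤ x := by
      have := mul_le_mul_of_nonneg_left (Int.floor_le (x / T)) hT.le
      rwa [mul_div_cancel₀ _ hT.ne'] at this
    have hlt : x < T * (⌊x / T⌋ + 1) := by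
      have h2 := Int.lt_floor_add_one (x / T)
      have := (div_lt_iff₀ hT).mp h2
      linarith
    exact ⟨⌊x / T⌋.toNat, by rw [hcast]; linarith, by rw [hcast]; linarith⟩
  · rintro ⟨k, h1, _⟩
    have : (0:ℝ) ≤ k * T := by positivity
    linarith

end Stmt10Aux

namespace Stmt10Aux

lemma keyA {T lm s : ℝ} (hT : 0 < T) (hl : 0 < lm) {P : ℝ → ℂ} (hP : Function.Periodic P T)
    (hi : IntegrableOn P (Set.Ico 0 T)) :
    IntegrableOn (fun x => Real.exp (2 * lm * (cut T x - x)) • P (x + s)) (Set.Ici 0) := by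
  set c := Real.exp (-(2 * lm * T)) with hc
  have hc0 : 0 < c := Real.exp_pos _
  have hc1 : c < 1 := by
    rw [hc]
    rw [Real.exp_lt_one_iff]
    nlinarith
  have hPs : Function.Periodic (fun x => P (x + s)) T := by
    intro x
    simp only [add_right_comm x T s]
    exact hP (x + s)
  -- base integrability of P(·+s) on a window
  have hbase : IntegrableOn (fun x => P (x + s)) (Set.Ico (0 - s) ((0 - s) + T)) := by
    have := (integrableOn_Ico_comp_add s 0 T P).mpr hi
    have e : (0:ℝ) - s + T = T - s := by ring
    rwa [e]
  have hPk : ∀ b : ℝ, IntegrableOn (fun x => P (x + s)) (Set.Ico b (b + T)) :=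
    fun b => per_transfer hT hPs hbase b
  have hPnorm : Function.Periodic (fun x => ‖P x‖) T := fun x => by simp [hP x]
  rw [Ici_eq_iUnion hT]
  apply integrableOn_iUnion_of_summable_integral_norm
  · -- integrable on each slice
    intro k
    have hmem : ∀ x ∈ Set.Ico ((k:ℝ) * T) (((k:ℝ) + 1) * T),
        Real.exp (2 * lm * (cut T x - x)) = c ^ k := by
      intro x hx
      have hfl : ⌊x / T⌋ = (k : ℤ) := by
        apply floor_eq_of_mem_Ico hT
        constructor
        · push_cast; exact hx.1
        · push_cast; push_cast at hx; exact hx.2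
      have : cut T x - x = -(T * k) := by
        unfold cut
        rw [hfl]
        push_cast
        ring
      rw [this, hc, ← Real.exp_nat_mul]
      congr 1
      ring
    have h1 : IntegrableOn (fun x => c ^ k • P (x + s))
        (Set.Ico ((k:ℝ) * T) (((k:ℝ) + 1) * T)) := by
      have := (hPk ((k:ℝ) * T)).smul (c ^ k)
      have e : (k:ℝ) * T + T = ((k:ℝ) + 1) * T := by ring
      rwa [e] at this
    exact h1.congr_fun (fun x hx => by rw [hmem x hx]) measurableSet_Ico
  · -- summable
    set M := ∫ x in Set.Ico (0:ℝ) T, ‖P x‖ with hM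
    have hval : ∀ k : ℕ, (∫ x in Set.Ico ((k:ℝ) * T) (((k:ℝ) + 1) * T),
        ‖Real.exp (2 * lm * (cut T x - x)) • P (x + s)‖) = c ^ k * M := by
      intro k
      have hmem : ∀ x ∈ Set.Ico ((k:ℝ) * T) (((k:ℝ) + 1) * T),
          ‖Real.exp (2 * lm * (cut T x - x)) • P (x + s)‖ = c ^ k * ‖P (x + s)‖ := by
        intro x hx
        have hfl : ⌊x / T⌋ = (k : ℤ) := by
          apply floor_eq_of_mem_Ico hT
          constructor
          · push_cast; exact hx.1
          · push_cast; push_cast at hx; exact hx.2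
        have hcut : cut T x - x = -(T * k) := by
          unfold cut; rw [hfl]; push_cast; ring
        rw [norm_smul, hcut, Real.norm_eq_abs,
          abs_of_pos (Real.exp_pos _), hc, ← Real.exp_nat_mul]
        congr 2
        ring
      rw [setIntegral_congr_fun measurableSet_Ico hmem, integral_const_mul]
      congr 1
      have e1 : (k:ℝ) * T = ((k:ℝ) * T + s) - s := by ring
      have e2 : ((k:ℝ) + 1) * T = (((k:ℝ) * T + s) + T) - s := by ring
      rw [e1, e2, setIntegral_Ico_comp_add s ((k:ℝ) * T + s) (((k:ℝ) * T + s) + T)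
        (fun x => ‖P x‖)]
      exact per_setIntegral hT hPnorm _
    simp only [hval]
    exact (summable_geometric_of_lt_one hc0.le hc1).mul_right M

end Stmt10Aux

namespace Stmt10Aux

lemma keyB {T lm s : ℝ} (hT : 0 < T) (hl : 0 < lm) {P : ℝ → ℂ} (hP : Function.Periodic P T)
    (hG : IntegrableOn (fun x => Real.exp (2 * lm * (cut T x - x)) • P (x + s)) (Set.Ici 0)) :
    IntegrableOn P (Set.Ico 0 T) := by
  have h1 : IntegrableOn (fun x => Real.exp (2 * lm * (cut T x - x)) • P (x + s))
      (Set.Ico 0 T) := hG.mono_set (fun x hx => hx.1)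
  have h2 : IntegrableOn (fun x => P (x + s)) (Set.Ico 0 T) := by
    apply h1.congr_fun ?_ measurableSet_Ico
    intro x hx
    simp only
    rw [cut_eq_self T hT hx.1 hx.2, sub_self, mul_zero, Real.exp_zero, one_smul]
  have h3 : IntegrableOn P (Set.Ico s (T + s)) := by
    have e1 : (0:ℝ) = s - s := by ring
    have e2 : T = (T + s) - s := by ring
    rw [e1, e2] at h2
    exact (integrableOn_Ico_comp_add s s (T + s) P).mp h2
  have h4 : IntegrableOn P (Set.Ico s (s + T)) := by rwa [add_comm T s] at h3
  have := per_transfer hT hP h4 0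
  rwa [zero_add] at this

lemma keyInt {T lm : ℝ} (hT : 0 < T) (hl : 0 < lm) {P : ℝ → ℂ}
    (hP : Function.Periodic P T) (s : ℝ) :
    (∫ x in Set.Ici (0:ℝ), Real.exp (2 * lm * (cut T x - x)) • P (x + s))
      = (1 - Real.exp (-(2 * lm * T)))⁻¹ • ∫ x in (0:ℝ)..T, P x := by
  set c := Real.exp (-(2 * lm * T)) with hc
  have hc0 : 0 < c := Real.exp_pos _
  have hc1 : c < 1 := by rw [hc, Real.exp_lt_one_iff]; nlinarith
  set G : ℝ → ℂ := fun x => Real.exp (2 * lm * (cut T x - x)) • P (x + s) with hGdef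
  have hPs : Function.Periodic (fun x => P (x + s)) T := by
    intro x
    simp only [add_right_comm x T s]
    exact hP (x + s)
  by_cases hi : IntegrableOn P (Set.Ico 0 T)
  · have hG : IntegrableOn G (Set.Ici 0) := keyA hT hl hP hi
    -- G(x+T) = c • G x
    have hGshift : ∀ x : ℝ, G (x + T) = c • G x := by
      intro x
      show Real.exp (2 * lm * (cut T (x + T) - (x + T))) • P (x + T + s)
        = c • (Real.exp (2 * lm * (cut T x - x)) • P (x + s))
      have hcut : cut T (x + T) = cut T x := by
        have := cut_add_int T hT.ne' x 1
        simpa using this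
      have hPeq : P (x + T + s) = P (x + s) := by
        have := hPs x
        simpa using this
      rw [hcut, hPeq, smul_smul]
      congr 1
      rw [hc, ← Real.exp_add]
      congr 1
      ring
    -- split
    have hsub1 : Set.Ico (0:ℝ) T ⊆ Set.Ici 0 := fun x hx => hx.1
    have hsub2 : Set.Ici T ⊆ Set.Ici (0:ℝ) := fun x hx => le_trans hT.le hx
    have hdisj : Disjoint (Set.Ico (0:ℝ) T) (Set.Ici T) := by
      rw [Set.disjoint_left]
      rintro x ⟨_, h2⟩ h3
      exact absurd h3 (not_le.mpr h2)
    have hsplit : (∫ x in Set.Ici (0:ℝ), G x)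
        = (∫ x in Set.Ico (0:ℝ) T, G x) + ∫ x in Set.Ici T, G x := by
      rw [show Set.Ici (0:ℝ) = Set.Ico 0 T ∪ Set.Ici T from (Set.Ico_union_Ici_eq_Ici hT.le).symm,
        setIntegral_union hdisj measurableSet_Ici
          (hG.mono_set (by rw [← Set.Ico_union_Ici_eq_Ici hT.le]; exact Set.subset_union_left))
          (hG.mono_set (by rw [← Set.Ico_union_Ici_eq_Ici hT.le]; exact Set.subset_union_right))]
    -- tail
    have htail : (∫ x in Set.Ici T, G x) = c • ∫ x in Set.Ici (0:ℝ), G x := by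
      have hpre : (· + T)⁻¹' Set.Ici T = Set.Ici (0:ℝ) := by
        ext x
        simp only [Set.mem_preimage, Set.mem_Ici]
        constructor <;> intro hx <;> linarith
      rw [← setIntegral_comp_add T G (Set.Ici T), hpre]
      simp only [hGshift]
      rw [integral_smul]
    -- head
    have hhead : (∫ x in Set.Ico (0:ℝ) T, G x) = ∫ x in (0:ℝ)..T, P x := by
      have h1 : (∫ x in Set.Ico (0:ℝ) T, G x) = ∫ x in Set.Ico (0:ℝ) T, P (x + s) := by
        apply setIntegral_congr_fun measurableSet_Ico
        intro x hx
        show Real.exp (2 * lm * (cut T x - x)) • P (x + s) = P (x + s)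
        rw [cut_eq_self T hT hx.1 hx.2, sub_self, mul_zero, Real.exp_zero, one_smul]
      have e1 : (0:ℝ) = s - s := by ring
      have e2 : T = (s + T) - s := by ring
      rw [h1]
      rw [show (∫ x in Set.Ico (0:ℝ) T, P (x + s))
          = ∫ x in Set.Ico (s - s) ((s + T) - s), P (x + s) by rw [← e1, ← e2]]
      rw [setIntegral_Ico_comp_add s s (s + T) P, per_setIntegral hT hP s,
        integral_Ico_eq_intervalIntegral hT.le]
    have hI : (∫ x in Set.Ici (0:ℝ), G x)
        = (∫ x in (0:ℝ)..T, P x) + c • ∫ x in Set.Ici (0:ℝ), G x := by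
      conv_lhs => rw [hsplit, hhead, htail]
    have h5 : ((1:ℝ) - c) • (∫ x in Set.Ici (0:ℝ), G x) = ∫ x in (0:ℝ)..T, P x := by
      rw [sub_smul, one_smul]
      nth_rewrite 1 [hI]
      rw [add_sub_cancel_right]
    calc (∫ x in Set.Ici (0:ℝ), G x)
        = ((1:ℝ) - c)⁻¹ • (((1:ℝ) - c) • ∫ x in Set.Ici (0:ℝ), G x) := by
          rw [smul_smul, inv_mul_cancel₀ (by linarith : (1:ℝ) - c ≠ 0), one_smul]
      _ = (1 - c)⁻¹ • ∫ x in (0:ℝ)..T, P x := by rw [h5]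
  · have hG : ¬ IntegrableOn G (Set.Ici 0) := fun h => hi (keyB hT hl hP h)
    rw [integral_undef hG]
    have hno : ¬ IntervalIntegrable P volume 0 T := by
      intro hwhole
      exact hi (hwhole.1.congr_set_ae Ico_ae_eq_Ioc)
    rw [intervalIntegral.integral_undef hno, smul_zero]

end Stmt10Aux

namespace Stmt10Aux

noncomputable def Pfun (T lm al : ℝ) (h' : ℝ → ℂ) (n : ℤ) (u : ℝ) : ℂ :=
  Complex.exp (((lm + al / 2) * cut T u : ℝ) : ℂ)
    * Complex.exp (-(2 * Real.pi * Complex.I * n / T) * ((cut T u : ℝ) : ℂ))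
    * h' (cut T u)

lemma conj_dgnstar (T lm al : ℝ) (n : ℤ) (x : ℝ) :
    (starRingEnd ℂ) (dgnstar T lm al n x)
      = (((1 - Real.exp (-2 * lm * T)) / Real.sqrt T : ℝ) : ℂ)
        * Complex.exp (((-al * x / 2 + 2 * lm * cut T x : ℝ) : ℂ))
        * Complex.exp ((-(2 * Real.pi * Complex.I * n / T) - lm) * x) := by
  unfold dgnstar efun
  rw [Complex.real_smul, Complex.real_smul, map_mul, map_mul]
  push_cast
  simp only [← Complex.exp_conj, map_mul, map_sub, map_neg, map_div₀, map_one, map_ofNat,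
    Complex.conj_I, Complex.conj_ofReal, map_intCast]
  rw [Complex.exp_add]
  ring_nf

lemma pointwise (T lm al : ℝ) (hT : 0 < T) (n : ℤ) (x t : ℝ) (h' : ℝ → ℂ)
    (hm : h' (x + t)
      = Real.exp ((lm + al / 2) * (cut T (x + t) - (x + t))) • h' (cut T (x + t))) :
    h' (x + t) * (starRingEnd ℂ) (dgnstar T lm al n x) * (Real.exp (al * x) : ℂ)
      = (Complex.exp (lamn T lm al n * t)
            * (((1 - Real.exp (-2 * lm * T)) / Real.sqrt T : ℝ) : ℂ))
        * (Real.exp (2 * lm * (cut T x - x)) • Pfun T lm al h' n (x + t)) := by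
  have hT0 : (T : ℂ) ≠ 0 := by exact_mod_cast hT.ne'
  set m : ℤ := ⌊(x + t) / T⌋ with hmdef
  have hcut : cut T (x + t) = x + t - T * (m : ℝ) := rfl
  rw [hm, conj_dgnstar]
  unfold Pfun
  simp only [Complex.real_smul, Complex.ofReal_exp]
  have hE : Complex.exp (((lm + al / 2) * (cut T (x + t) - (x + t)) : ℝ) : ℂ)
        * Complex.exp (((-al * x / 2 + 2 * lm * cut T x : ℝ) : ℂ))
        * Complex.exp ((-(2 * Real.pi * Complex.I * n / T) - lm) * x)
        * Complex.exp (((al * x : ℝ) : ℂ))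
      = Complex.exp (lamn T lm al n * t)
        * Complex.exp (((2 * lm * (cut T x - x) : ℝ) : ℂ))
        * Complex.exp (((lm + al / 2) * cut T (x + t) : ℝ) : ℂ)
        * Complex.exp (-(2 * Real.pi * Complex.I * n / T) * ((cut T (x + t) : ℝ) : ℂ)) := by
    simp only [← Complex.exp_add]
    have harg : (((lm + al / 2) * (cut T (x + t) - (x + t)) : ℝ) : ℂ)
          + ((-al * x / 2 + 2 * lm * cut T x : ℝ) : ℂ)
          + (-(2 * Real.pi * Complex.I * n / T) - lm) * x
          + ((al * x : ℝ) : ℂ)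
        = (lamn T lm al n * t
          + ((2 * lm * (cut T x - x) : ℝ) : ℂ)
          + (((lm + al / 2) * cut T (x + t) : ℝ) : ℂ)
          + -(2 * Real.pi * Complex.I * n / T) * ((cut T (x + t) : ℝ) : ℂ))
          + ((-(n * m) : ℤ) : ℂ) * (2 * (Real.pi : ℂ) * Complex.I) := by
      unfold lamn
      rw [hcut]
      push_cast
      field_simp
      ring
    rw [harg, Complex.exp_add, Complex.exp_int_mul_two_pi_mul_I, mul_one]
  linear_combination ((((1 - Real.exp (-2 * lm * T)) / Real.sqrt T : ℝ) : ℂ)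
    * h' (cut T (x + t))) * hE

end Stmt10Aux

open Stmt10Aux in
/-- `𝒰_t^* g_n^* = e^{conj(λ_n) t} g_n^*`, expressed through the defining
property of the adjoint: for every `h ∈ H_α^T` (absolutely continuous with weak
derivative `h'`, weighted square-integrable, with `e^{α·/2} h' ∈ ran 𝒜`),
`⟨𝒰_t h, g_n^*⟩_α = ⟨h, e^{conj(λ_n) t} g_n^*⟩_α`, where
`⟨f,g⟩_α = f(0) conj(g(0)) + ∫₀^∞ f' conj(g') e^{αx} dx` and `(𝒰_t h)(x) = h(x+t)`. -/
theorem stmt_10 (T lm al : ℝ) (hT : 0 < T) (hl : 0 < lm) (hal : 0 < al)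
    (n : ℤ) (t : ℝ) (ht : 0 ≤ t)
    (h h' : ℝ → ℂ)
    (hrep : ∀ x, 0 ≤ x → h x = h 0 + ∫ y in (0:ℝ)..x, h' y)
    (hint : IntegrableOn (fun x => ‖h' x‖ ^ 2 * Real.exp (al * x)) (Set.Ici 0))
    (hmem : ∀ x, 0 ≤ x →
      h' x = Real.exp ((lm + al / 2) * (cut T x - x)) • h' (cut T x)) :
    h t * (starRingEnd ℂ) (gnstar T lm al n 0)
        + (∫ x in Set.Ici (0:ℝ),
            h' (x + t) * (starRingEnd ℂ) (dgnstar T lm al n x) * Real.exp (al * x))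
      = h 0 * (starRingEnd ℂ)
            (Complex.exp ((starRingEnd ℂ) (lamn T lm al n) * t) * gnstar T lm al n 0)
          + ∫ x in Set.Ici (0:ℝ),
              h' x * (starRingEnd ℂ)
                  (Complex.exp ((starRingEnd ℂ) (lamn T lm al n) * t) *
                    dgnstar T lm al n x) *
                Real.exp (al * x) := by
  have hg0 : gnstar T lm al n 0 = 0 := intervalIntegral.integral_same
  simp only [hg0, mul_zero, map_zero, zero_add]
  have hPer : Function.Periodic (Pfun T lm al h' n) T := by
    intro u
    unfold Pfun
    have hc : cut T (u + T) = cut T u := by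
      have := cut_add_int T hT.ne' u 1
      simpa using this
    rw [hc]
  have hL : (∫ x in Set.Ici (0:ℝ),
        h' (x + t) * (starRingEnd ℂ) (dgnstar T lm al n x) * Real.exp (al * x))
      = (Complex.exp (lamn T lm al n * t)
          * (((1 - Real.exp (-2 * lm * T)) / Real.sqrt T : ℝ) : ℂ))
        * ∫ x in Set.Ici (0:ℝ),
            Real.exp (2 * lm * (cut T x - x)) • Pfun T lm al h' n (x + t) := by
    rw [← integral_const_mul]
    apply setIntegral_congr_fun measurableSet_Ici
    intro x hx
    exact pointwise T lm al hT n x t h' (hmem (x + t) (by simp only [Set.mem_Ici] at hx; linarith))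
  have hR : (∫ x in Set.Ici (0:ℝ),
        h' x * (starRingEnd ℂ)
            (Complex.exp ((starRingEnd ℂ) (lamn T lm al n) * t) * dgnstar T lm al n x) *
          Real.exp (al * x))
      = (Complex.exp (lamn T lm al n * t)
          * (((1 - Real.exp (-2 * lm * T)) / Real.sqrt T : ℝ) : ℂ))
        * ∫ x in Set.Ici (0:ℝ),
            Real.exp (2 * lm * (cut T x - x)) • Pfun T lm al h' n (x + 0) := by
    rw [← integral_const_mul]
    apply setIntegral_congr_fun measurableSet_Ici
    intro x hx
    simp only [Set.mem_Ici] at hx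
    have hpt := pointwise T lm al hT n x 0 h' (by simpa using hmem x hx)
    simp only [add_zero, Complex.ofReal_zero, mul_zero, Complex.exp_zero, one_mul] at hpt
    have hconj : (starRingEnd ℂ)
          (Complex.exp ((starRingEnd ℂ) (lamn T lm al n) * t) * dgnstar T lm al n x)
        = Complex.exp (lamn T lm al n * t) * (starRingEnd ℂ) (dgnstar T lm al n x) := by
      rw [map_mul, ← Complex.exp_conj, map_mul, Complex.conj_conj, Complex.conj_ofReal]
    simp only [hconj, add_zero]
    linear_combination Complex.exp (lamn T lm al n * t) * hpt
  rw [hL, hR, keyInt hT hl hPer t, keyInt hT hl hPer 0]
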